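/- Under the hypotheses of Theorem 1 (transmission constants 0 < α ≤ β for φ, condition numbers of all W_l, W̃_l, ΔW_l bounded by κ), the hidden activations satisfy for every l: ‖h̃_l(x)‖₂ / ‖h_l(x)‖₂ ≤ (β κ²/α)^l · ∏_{k=1}^{l} (1 + ‖ΔW_k‖_F/‖W_k‖_F), where h_l and h̃_l are the hidden layers of the original and perturbed multilayer perceptrons. -/

import Mathlib

open Finset

/-- Euclidean norm of a vector. -/
noncomputable def enorm {m : ℕ} (v : Fin m → ℝ) : ℝ :=
  Real.sqrt (∑ i, v i ^ 2)

/-- Frobenius norm of a matrix. -/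
noncomputable def frob {a b : ℕ} (M : Matrix (Fin a) (Fin b) ℝ) : ℝ :=
  Real.sqrt (∑ i, ∑ j, M i j ^ 2)

/-- `M` has all singular values positive and condition number (ratio of largest to
smallest singular value) at most `κ`. -/
def HasCondLE {a b : ℕ} (M : Matrix (Fin a) (Fin b) ℝ) (κ : ℝ) : Prop :=
  ∃ σmin σmax : ℝ, 0 < σmin ∧ σmax ≤ κ * σmin ∧
    ∀ v : Fin b → ℝ, σmin * _root_.enorm v ≤ _root_.enorm (M.mulVec v) ∧
      _root_.enorm (M.mulVec v) ≤ σmax * _root_.enorm v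

/-- Hidden layers of a multilayer perceptron:
`h 0 x = x`, `h (l+1) x = φ(W l · h l x)` with `φ` applied elementwise. -/
noncomputable def mlpHidden (φ : ℝ → ℝ) (n : ℕ → ℕ)
    (W : ∀ l : ℕ, Matrix (Fin (n (l + 1))) (Fin (n l)) ℝ)
    (x : Fin (n 0) → ℝ) : ∀ l : ℕ, Fin (n l) → ℝ
  | 0 => x
  | l + 1 => fun i => φ ((W l).mulVec (mlpHidden φ n W x l) i)

lemma enorm_nonneg' {m : ℕ} (v : Fin m → ℝ) : 0 ≤ _root_.enorm v := Real.sqrt_nonneg _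

lemma vec_enorm_pos {m : ℕ} {v : Fin m → ℝ} (h : v ≠ 0) : 0 < _root_.enorm v := by
  obtain ⟨i, hi⟩ : ∃ i, v i ≠ 0 := by
    by_contra h'; push_neg at h'; exact h (funext h')
  refine Real.sqrt_pos.mpr (lt_of_lt_of_le (pow_pos (abs_pos.mpr hi) 2) ?_)
  calc |v i| ^ 2 = v i ^ 2 := sq_abs _
    _ ≤ ∑ j, v j ^ 2 :=
      Finset.single_le_sum (f := fun j => v j ^ 2) (fun j _ => sq_nonneg _) (Finset.mem_univ i)

lemma enorm_eq_norm {m : ℕ} (v : Fin m → ℝ) :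
    _root_.enorm v = ‖(WithLp.equiv 2 (Fin m → ℝ)).symm v‖ := by
  rw [EuclideanSpace.norm_eq]
  unfold _root_.enorm
  congr 1
  refine Finset.sum_congr rfl fun i _ => ?_
  rw [Real.norm_eq_abs, sq_abs]; rfl

lemma enorm_add_le' {m : ℕ} (u v : Fin m → ℝ) : _root_.enorm (u + v) ≤ _root_.enorm u + _root_.enorm v := by
  rw [enorm_eq_norm, enorm_eq_norm, enorm_eq_norm]
  exact norm_add_le _ _

lemma enorm_comp_le {m : ℕ} (φ : ℝ → ℝ) (β : ℝ) (hβ : 0 ≤ β) (h : ∀ x, |φ x| ≤ β * |x|)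
    (v : Fin m → ℝ) : _root_.enorm (fun i => φ (v i)) ≤ β * _root_.enorm v := by
  have h1 : _root_.enorm (fun i => φ (v i)) ≤ Real.sqrt (∑ i, (β * |v i|) ^ 2) := by
    apply Real.sqrt_le_sqrt
    refine Finset.sum_le_sum fun i _ => ?_
    calc φ (v i) ^ 2 = |φ (v i)| ^ 2 := (sq_abs _).symm
      _ ≤ (β * |v i|) ^ 2 := by
          apply pow_le_pow_left₀ (abs_nonneg _) (h _)
  refine h1.trans_eq ?_
  have h2 : ∑ i, (β * |v i|) ^ 2 = β ^ 2 * ∑ i, v i ^ 2 := by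
    rw [Finset.mul_sum]
    refine Finset.sum_congr rfl fun i _ => by rw [mul_pow, sq_abs]
  rw [h2, Real.sqrt_mul (sq_nonneg _), Real.sqrt_sq hβ]; rfl

lemma le_enorm_comp {m : ℕ} (φ : ℝ → ℝ) (α : ℝ) (hα : 0 ≤ α) (h : ∀ x, α * |x| ≤ |φ x|)
    (v : Fin m → ℝ) : α * _root_.enorm v ≤ _root_.enorm (fun i => φ (v i)) := by
  have h2 : α * _root_.enorm v = Real.sqrt (∑ i, (α * |v i|) ^ 2) := by
    have : ∑ i, (α * |v i|) ^ 2 = α ^ 2 * ∑ i, v i ^ 2 := by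
      rw [Finset.mul_sum]
      refine Finset.sum_congr rfl fun i _ => by rw [mul_pow, sq_abs]
    rw [this, Real.sqrt_mul (sq_nonneg _), Real.sqrt_sq hα]; rfl
  rw [h2]
  apply Real.sqrt_le_sqrt
  refine Finset.sum_le_sum fun i _ => ?_
  calc (α * |v i|) ^ 2 ≤ |φ (v i)| ^ 2 := by
        apply pow_le_pow_left₀ (by positivity) (h _)
    _ = φ (v i) ^ 2 := sq_abs _

lemma enorm_single {m : ℕ} (j : Fin m) : _root_.enorm (Pi.single j (1 : ℝ)) = 1 := by
  unfold _root_.enorm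
  have : ∑ i, Pi.single j (1 : ℝ) i ^ 2 = (1 : ℝ) := by
    rw [Finset.sum_eq_single j]
    · simp
    · intro b _ hb; rw [Pi.single_eq_of_ne hb]; ring
    · simp
  rw [this, Real.sqrt_one]

lemma frob_as_cols {a b : ℕ} (M : Matrix (Fin a) (Fin b) ℝ) :
    frob M = Real.sqrt (∑ j, _root_.enorm (M.mulVec (Pi.single j 1)) ^ 2) := by
  unfold frob
  rw [Finset.sum_comm]
  congr 1
  refine Finset.sum_congr rfl fun j _ => ?_
  have h1 : M.mulVec (Pi.single j 1) = fun i => M i j := by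
    funext i; simp [Matrix.mulVec_single]
  rw [h1]
  unfold _root_.enorm
  rw [Real.sq_sqrt (by positivity)]

lemma frob_bounds {a b : ℕ} (M : Matrix (Fin a) (Fin b) ℝ) (σmin σmax : ℝ)
    (hs : 0 ≤ σmin) (hS : 0 ≤ σmax)
    (hmin : ∀ v, σmin * _root_.enorm v ≤ _root_.enorm (M.mulVec v))
    (hmax : ∀ v, _root_.enorm (M.mulVec v) ≤ σmax * _root_.enorm v) :
    Real.sqrt b * σmin ≤ frob M ∧ frob M ≤ Real.sqrt b * σmax := by
  have hl : ∀ j : Fin b, σmin ^ 2 ≤ _root_.enorm (M.mulVec (Pi.single j 1)) ^ 2 := fun j =>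
    pow_le_pow_left₀ hs (by simpa [enorm_single] using hmin (Pi.single j 1)) 2
  have hu : ∀ j : Fin b, _root_.enorm (M.mulVec (Pi.single j 1)) ^ 2 ≤ σmax ^ 2 := fun j =>
    pow_le_pow_left₀ (enorm_nonneg' _) (by simpa [enorm_single] using hmax (Pi.single j 1)) 2
  have hsqrt : ∀ c : ℝ, 0 ≤ c → Real.sqrt ((b : ℝ) * c ^ 2) = Real.sqrt b * c := by
    intro c hc
    rw [Real.sqrt_mul (Nat.cast_nonneg b), Real.sqrt_sq hc]
  constructor
  · rw [frob_as_cols, ← hsqrt σmin hs]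
    apply Real.sqrt_le_sqrt
    calc (b : ℝ) * σmin ^ 2 = ∑ _j : Fin b, σmin ^ 2 := by
          simp [Finset.sum_const, Finset.card_univ]
      _ ≤ _ := Finset.sum_le_sum fun j _ => hl j
  · rw [frob_as_cols, ← hsqrt σmax hS]
    apply Real.sqrt_le_sqrt
    calc ∑ j, _root_.enorm (M.mulVec (Pi.single j 1)) ^ 2 ≤ ∑ _j : Fin b, σmax ^ 2 :=
          Finset.sum_le_sum fun j _ => hu j
      _ = (b : ℝ) * σmax ^ 2 := by simp [Finset.sum_const, Finset.card_univ]

lemma frob_nonneg {a b : ℕ} (M : Matrix (Fin a) (Fin b) ℝ) : 0 ≤ frob M := Real.sqrt_nonneg _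

lemma dim_pos_of_ne_zero {m : ℕ} {v : Fin m → ℝ} (h : v ≠ 0) : 0 < m := by
  rcases Nat.eq_zero_or_pos m with h0 | hm
  · exact absurd (funext fun i => absurd i.isLt (by omega)) h
  · exact hm

lemma div_aux (β κ s α R c d : ℝ) (hα : α ≠ 0) (hs : s ≠ 0) (hd : d ≠ 0) :
    (β * (κ ^ 2 * s * R)) * c / (α * (s * d)) = (β * κ ^ 2 / α) * R * (c / d) := by
  field_simp

lemma step_ratio {a b : ℕ} (φ : ℝ → ℝ) (α β κ : ℝ)
    (hα : 0 < α) (hαβ : α ≤ β)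
    (hφ1 : ∀ x : ℝ, α * |x| ≤ |φ x| ∧ |φ x| ≤ β * |x|)
    (Wl ΔWl : Matrix (Fin a) (Fin b) ℝ)
    (hW : HasCondLE Wl κ) (hΔ : HasCondLE ΔWl κ)
    (v vt : Fin b → ℝ) (hv : v ≠ 0) (hvt : vt ≠ 0) :
    _root_.enorm (fun i => φ ((Wl + ΔWl).mulVec vt i)) / _root_.enorm (fun i => φ (Wl.mulVec v i)) ≤
      (β * κ ^ 2 / α) * (1 + frob ΔWl / frob Wl) * (_root_.enorm vt / _root_.enorm v) := by
  obtain ⟨s, S, hs, hSs, hWb⟩ := hW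
  obtain ⟨t, T, ht, hTt, hΔb⟩ := hΔ
  have hd : 0 < _root_.enorm v := vec_enorm_pos hv
  have hc : 0 < _root_.enorm vt := vec_enorm_pos hvt
  have hb : 0 < b := dim_pos_of_ne_zero hv
  have hβ : 0 < β := hα.trans_le hαβ
  have hsS : s ≤ S := le_of_mul_le_mul_right ((hWb v).1.trans (hWb v).2) hd
  have htT : t ≤ T := le_of_mul_le_mul_right ((hΔb v).1.trans (hΔb v).2) hd
  have hκ : 1 ≤ κ := by nlinarith [mul_pos hs hd]
  have hWf := frob_bounds Wl s S hs.le (hs.le.trans hsS) (fun u => (hWb u).1) (fun u => (hWb u).2)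
  have hΔf := frob_bounds ΔWl t T ht.le (ht.le.trans htT) (fun u => (hΔb u).1) (fun u => (hΔb u).2)
  have hsqb : 0 < Real.sqrt b := Real.sqrt_pos.mpr (by exact_mod_cast hb)
  have hfW : 0 < frob Wl := lt_of_lt_of_le (by positivity) hWf.1
  set r := frob ΔWl / frob Wl with hrdef
  have hr : 0 ≤ r := div_nonneg (frob_nonneg _) hfW.le
  have hTkey : T ≤ κ ^ 2 * s * r := by
    rw [hrdef, ← mul_div_assoc, le_div_iff₀ hfW]
    have e1 : frob Wl ≤ Real.sqrt b * (κ * s) :=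
      hWf.2.trans (by nlinarith)
    calc T * frob Wl ≤ (κ * t) * (Real.sqrt b * (κ * s)) :=
          mul_le_mul hTt e1 hfW.le (by nlinarith)
      _ = (κ ^ 2 * s) * (Real.sqrt b * t) := by ring
      _ ≤ κ ^ 2 * s * frob ΔWl := mul_le_mul_of_nonneg_left hΔf.1 (by positivity)
  have hST : S + T ≤ κ ^ 2 * s * (1 + r) := by nlinarith
  have hnum : _root_.enorm (fun i => φ ((Wl + ΔWl).mulVec vt i)) ≤
      (β * (κ ^ 2 * s * (1 + r))) * _root_.enorm vt := by
    have h1 := enorm_comp_le φ β hβ.le (fun x => (hφ1 x).2) ((Wl + ΔWl).mulVec vt)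
    have h2 : _root_.enorm ((Wl + ΔWl).mulVec vt) ≤ (S + T) * _root_.enorm vt := by
      rw [Matrix.add_mulVec]
      exact (enorm_add_le' _ _).trans (by linarith [(hWb vt).2, (hΔb vt).2])
    calc _root_.enorm (fun i => φ ((Wl + ΔWl).mulVec vt i)) ≤ β * _root_.enorm ((Wl + ΔWl).mulVec vt) := h1
      _ ≤ β * ((S + T) * _root_.enorm vt) := by nlinarith
      _ ≤ (β * (κ ^ 2 * s * (1 + r))) * _root_.enorm vt := by
          nlinarith [mul_le_mul_of_nonneg_left (mul_le_mul_of_nonneg_right hST hc.le) hβ.le]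
  have hden : α * (s * _root_.enorm v) ≤ _root_.enorm (fun i => φ (Wl.mulVec v i)) := by
    have h1 := le_enorm_comp φ α hα.le (fun x => (hφ1 x).1) (Wl.mulVec v)
    nlinarith [(hWb v).1]
  calc _root_.enorm (fun i => φ ((Wl + ΔWl).mulVec vt i)) / _root_.enorm (fun i => φ (Wl.mulVec v i)) ≤
        ((β * (κ ^ 2 * s * (1 + r))) * _root_.enorm vt) / (α * (s * _root_.enorm v)) :=
      div_le_div₀ (by positivity) hnum (by positivity) hden
    _ = (β * κ ^ 2 / α) * (1 + r) * (_root_.enorm vt / _root_.enorm v) :=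
      div_aux β κ s α (1 + r) _ _ hα.ne' hs.ne' hd.ne'

/-- Intermediate bound in Theorem 1(a): the ratio of perturbed to unperturbed hidden
activation norms at every layer `l ≤ L`. -/
theorem mlp_hidden_activation_ratio
    (L : ℕ) (n : ℕ → ℕ) (φ : ℝ → ℝ) (α β κ : ℝ)
    (hα : 0 < α) (hαβ : α ≤ β)
    (hφ1 : ∀ x : ℝ, α * |x| ≤ |φ x| ∧ |φ x| ≤ β * |x|)
    (hφ2 : ∀ x y : ℝ, α * |x - y| ≤ |φ x - φ y| ∧ |φ x - φ y| ≤ β * |x - y|)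
    (W ΔW : ∀ l : ℕ, Matrix (Fin (n (l + 1))) (Fin (n l)) ℝ)
    (hcond : ∀ l < L, HasCondLE (W l) κ ∧ HasCondLE (W l + ΔW l) κ ∧ HasCondLE (ΔW l) κ)
    (x : Fin (n 0) → ℝ) (hx : x ≠ 0)
    (hnz : ∀ l ≤ L, mlpHidden φ n W x l ≠ 0 ∧ mlpHidden φ n (fun k => W k + ΔW k) x l ≠ 0) :
    ∀ l ≤ L,
      _root_.enorm (mlpHidden φ n (fun k => W k + ΔW k) x l) / _root_.enorm (mlpHidden φ n W x l) ≤
        (β * κ ^ 2 / α) ^ l * ∏ k ∈ Finset.range l, (1 + frob (ΔW k) / frob (W k)) := by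
  intro l
  induction l with
  | zero =>
    intro _
    simp only [mlpHidden, pow_zero, Finset.prod_range_zero, mul_one]
    rw [div_self (vec_enorm_pos hx).ne']
  | succ l ih =>
    intro hl
    have hlL : l < L := hl
    have hl' : l ≤ L := hlL.le
    have hv : mlpHidden φ n W x l ≠ 0 := (hnz l hl').1
    have hvt : mlpHidden φ n (fun k => W k + ΔW k) x l ≠ 0 := (hnz l hl').2
    have hstep := step_ratio φ α β κ hα hαβ hφ1 (W l) (ΔW l)
      (hcond l hlL).1 (hcond l hlL).2.2 _ _ hv hvt
    have hC : 0 ≤ (β * κ ^ 2 / α) * (1 + frob (ΔW l) / frob (W l)) := by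
      have h1 : 0 ≤ frob (ΔW l) / frob (W l) :=
        div_nonneg (frob_nonneg _) (frob_nonneg _)
      have hβ : 0 < β := hα.trans_le hαβ
      have h2 : 0 ≤ β * κ ^ 2 / α := by positivity
      nlinarith
    calc _root_.enorm (mlpHidden φ n (fun k => W k + ΔW k) x (l + 1)) /
          _root_.enorm (mlpHidden φ n W x (l + 1)) ≤
        (β * κ ^ 2 / α) * (1 + frob (ΔW l) / frob (W l)) *
          (_root_.enorm (mlpHidden φ n (fun k => W k + ΔW k) x l) /
            _root_.enorm (mlpHidden φ n W x l)) := by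
          simpa only [mlpHidden] using hstep
      _ ≤ (β * κ ^ 2 / α) * (1 + frob (ΔW l) / frob (W l)) *
          ((β * κ ^ 2 / α) ^ l * ∏ k ∈ Finset.range l, (1 + frob (ΔW k) / frob (W k))) :=
          mul_le_mul_of_nonneg_left (ih hl') hC
      _ = (β * κ ^ 2 / α) ^ (l + 1) *
          ∏ k ∈ Finset.range (l + 1), (1 + frob (ΔW k) / frob (W k)) := by
          rw [pow_succ, Finset.prod_range_succ]; ring
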